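/- Let G be a graph with weight function w : V(G) → ℝ. Then G is w-well-covered if and only if for every generating subgraph B of G with bipartition (B_X, B_Y), one has w(B_X) = w(B_Y). -/

import Mathlib

open SimpleGraph Set

variable {V : Type*} [Fintype V] [DecidableEq V]

/-- `N_i(S)`: vertices whose minimum distance to the set `S` equals `i`. -/
def NSet (G : SimpleGraph V) (i : ℕ) (S : Set V) : Set V :=
  {u | (⨅ s ∈ S, G.edist s u) = (i : ℕ∞)}

/-- `N_i(x)`: vertices at distance exactly `i` from `x`. -/
def Nv (G : SimpleGraph V) (i : ℕ) (x : V) : Set V := {u | G.edist x u = (i : ℕ∞)}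

/-- `S` is an independent set of `G`. -/
def IsIndep (G : SimpleGraph V) (S : Set V) : Prop :=
  S.Pairwise fun u v => ¬ G.Adj u v

/-- `A` dominates `T`. -/
def Dominates (G : SimpleGraph V) (A T : Set V) : Prop :=
  T ⊆ A ∪ {u | ∃ a ∈ A, G.Adj a u}

/-- `S` is a maximal independent set of `G`. -/
def IsMaxIndep (G : SimpleGraph V) (S : Set V) : Prop :=
  IsIndep G S ∧ ∀ T, IsIndep G T → S ⊆ T → T = S

/-- The induced subgraph on `X ∪ Y` is complete bipartite with parts `X`, `Y`. -/
def IsCompBipartite (G : SimpleGraph V) (X Y : Set V) : Prop :=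
  X.Nonempty ∧ Y.Nonempty ∧ Disjoint X Y ∧ IsIndep G X ∧ IsIndep G Y ∧
    ∀ x ∈ X, ∀ y ∈ Y, G.Adj x y

/-- `B = (X, Y)` is a generating subgraph of `G`. -/
def Generating (G : SimpleGraph V) (X Y : Set V) : Prop :=
  IsCompBipartite G X Y ∧ ∃ S : Set V, IsIndep G S ∧ Disjoint S (X ∪ Y) ∧
    IsMaxIndep G (S ∪ X) ∧ IsMaxIndep G (S ∪ Y)

/-- `G` contains a (not necessarily induced) cycle on `k` vertices. -/
def HasCycle (G : SimpleGraph V) (k : ℕ) : Prop :=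
  ∃ f : ZMod k → V, Function.Injective f ∧ ∀ i, G.Adj (f i) (f (i + 1))

/-- Weight of a set of vertices. -/
noncomputable def wt (w : V → ℝ) (S : Set V) : ℝ := ∑ x ∈ S.toFinite.toFinset, w x

/-- `G` is `w`-well-covered. -/
def WWellCovered (G : SimpleGraph V) (w : V → ℝ) : Prop :=
  ∀ S T : Set V, IsMaxIndep G S → IsMaxIndep G T → wt w S = wt w T

lemma wt_union (w : V → ℝ) {A B : Set V} (h : Disjoint A B) :
    wt w (A ∪ B) = wt w A + wt w B := by
  unfold wt
  rw [← Finset.sum_union]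
  · apply Finset.sum_congr _ fun _ _ => rfl
    ext x
    simp [Set.Finite.mem_toFinset]
  · simp only [Finset.disjoint_left, Set.Finite.mem_toFinset]
    exact fun a ha hb => Set.disjoint_left.mp h ha hb

lemma Set.Finite.exists_maximal_wrt {α β : Type*} [PartialOrder β] (f : α → β) (s : Set α)
    (h : s.Finite) (hs : s.Nonempty) :
    ∃ a ∈ s, ∀ a' ∈ s, f a ≤ f a' → f a = f a' := by
  obtain ⟨a, ha, hmax⟩ := h.exists_maximalFor f s hs
  exact ⟨a, ha, fun a' ha' hle => le_antisymm hle (hmax ha' hle)⟩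

omit [DecidableEq V] in
lemma exists_maxIndep_superset (G : SimpleGraph V) {I : Set V} (hI : IsIndep G I) :
    ∃ S : Set V, I ⊆ S ∧ IsMaxIndep G S := by
  obtain ⟨S, hS, hmax⟩ := Set.Finite.exists_maximal_wrt
    (fun T => T.toFinite.toFinset.card) {T | IsIndep G T ∧ I ⊆ T}
    (Set.toFinite _) ⟨I, hI, subset_rfl⟩
  refine ⟨S, hS.2, hS.1, fun T hT hST => ?_⟩
  have hTC : T ∈ {T | IsIndep G T ∧ I ⊆ T} := ⟨hT, hS.2.trans hST⟩
  have hsubF : S.toFinite.toFinset ⊆ T.toFinite.toFinset :=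
    Set.Finite.toFinset_subset_toFinset.mpr hST
  have heq := hmax T hTC (Finset.card_le_card hsubF)
  have hfin : S.toFinite.toFinset = T.toFinite.toFinset :=
    Finset.eq_of_subset_of_card_le hsubF heq.ge
  have := congrArg (fun s : Finset V => (s : Set V)) hfin
  simpa [Set.Finite.coe_toFinset] using this.symm

theorem wWellCovered_iff_generating_constraints (G : SimpleGraph V) (w : V → ℝ) :
    WWellCovered G w ↔ ∀ X Y : Set V, Generating G X Y → wt w X = wt w Y := by
  constructor
  · rintro hwc X Y ⟨hB, S, hSind, hdisj, hmx, hmy⟩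
    have h1 := hwc _ _ hmx hmy
    have dX : Disjoint S X := hdisj.mono_right Set.subset_union_left
    have dY : Disjoint S Y := hdisj.mono_right Set.subset_union_right
    rw [wt_union w dX, wt_union w dY] at h1
    linarith
  · intro hgen
    by_contra hwc
    rw [WWellCovered] at hwc
    push_neg at hwc
    obtain ⟨T1, T2, hT1, hT2, hTne⟩ := hwc
    set C : Set (Set V × Set V) :=
      {p | IsMaxIndep G p.1 ∧ IsMaxIndep G p.2 ∧ wt w p.1 ≠ wt w p.2} with hC
    obtain ⟨⟨S1, S2⟩, ⟨h1, h2, hne⟩, hmax⟩ := Set.Finite.exists_maximal_wrt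
      (fun p : Set V × Set V => (p.1 ∩ p.2).toFinite.toFinset.card) C
      (Set.toFinite _) ⟨(T1, T2), hT1, hT2, hTne⟩
    -- both difference sets are nonempty
    have hXne : (S1 \ S2).Nonempty := by
      rw [Set.nonempty_iff_ne_empty]
      intro h
      have hsub : S1 ⊆ S2 := by rwa [Set.diff_eq_empty] at h
      exact hne (by rw [h1.2 S2 h2.1 hsub])
    have hYne : (S2 \ S1).Nonempty := by
      rw [Set.nonempty_iff_ne_empty]
      intro h
      have hsub : S2 ⊆ S1 := by rwa [Set.diff_eq_empty] at h
      exact hne (by rw [h2.2 S1 h1.1 hsub])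
    -- every vertex of S1 \ S2 is adjacent to every vertex of S2 \ S1
    have hadj : ∀ x ∈ S1 \ S2, ∀ y ∈ S2 \ S1, G.Adj x y := by
      intro x hx y hy
      by_contra hnadj
      have hI : IsIndep G ((S1 ∩ S2) ∪ {x, y}) := by
        rintro a (ha | ha) b (hb | hb) hab
        · exact h1.1 ha.1 hb.1 hab
        · rcases hb with rfl | rfl
          · exact h1.1 ha.1 hx.1 hab
          · exact h2.1 ha.2 hy.1 hab
        · rcases ha with rfl | rfl
          · exact h1.1 hx.1 hb.1 hab
          · exact h2.1 hy.1 hb.2 hab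
        · rcases ha with rfl | rfl <;> rcases hb with rfl | rfl
          · exact absurd rfl hab
          · exact hnadj
          · exact fun h => hnadj h.symm
          · exact absurd rfl hab
      obtain ⟨S3, hsub3, h3⟩ := exists_maxIndep_superset G hI
      have hxS3 : x ∈ S3 := hsub3 (Or.inr (Or.inl rfl))
      have hyS3 : y ∈ S3 := hsub3 (Or.inr (Or.inr rfl))
      have hAS3 : S1 ∩ S2 ⊆ S3 := fun a ha => hsub3 (Or.inl ha)
      by_cases hq : wt w S1 = wt w S3
      · -- (S3, S2) is a counterexample pair with larger intersection
        have hmem : ((S3, S2) : Set V × Set V) ∈ C := ⟨h3, h2, fun h => hne (hq.trans h)⟩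
        have hsubA : S1 ∩ S2 ⊆ S3 ∩ S2 := fun a ha => ⟨hAS3 ha, ha.2⟩
        have hlt : (S1 ∩ S2).toFinite.toFinset.card < (S3 ∩ S2).toFinite.toFinset.card := by
          apply Finset.card_lt_card
          rw [Finset.ssubset_iff_of_subset (Set.Finite.toFinset_subset_toFinset.mpr hsubA)]
          exact ⟨y, (Set.Finite.mem_toFinset _).mpr ⟨hyS3, hy.1⟩,
            fun h => hy.2 ((Set.Finite.mem_toFinset _).mp h).1⟩
        exact hlt.ne (hmax _ hmem hlt.le)
      · -- (S1, S3) is a counterexample pair with larger intersection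
        have hmem : ((S1, S3) : Set V × Set V) ∈ C := ⟨h1, h3, hq⟩
        have hsubA : S1 ∩ S2 ⊆ S1 ∩ S3 := fun a ha => ⟨ha.1, hAS3 ha⟩
        have hlt : (S1 ∩ S2).toFinite.toFinset.card < (S1 ∩ S3).toFinite.toFinset.card := by
          apply Finset.card_lt_card
          rw [Finset.ssubset_iff_of_subset (Set.Finite.toFinset_subset_toFinset.mpr hsubA)]
          exact ⟨x, (Set.Finite.mem_toFinset _).mpr ⟨hx.1, hxS3⟩,
            fun h => hx.2 ((Set.Finite.mem_toFinset _).mp h).2⟩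
        exact hlt.ne (hmax _ hmem hlt.le)
    -- build the generating subgraph
    have dAX : Disjoint (S1 ∩ S2) (S1 \ S2) :=
      Set.disjoint_left.mpr fun a ha hb => hb.2 ha.2
    have dAY : Disjoint (S1 ∩ S2) (S2 \ S1) :=
      Set.disjoint_left.mpr fun a ha hb => hb.2 ha.1
    have hUX : (S1 ∩ S2) ∪ (S1 \ S2) = S1 := Set.inter_union_diff S1 S2
    have hUY : (S1 ∩ S2) ∪ (S2 \ S1) = S2 := by
      rw [Set.inter_comm]; exact Set.inter_union_diff S2 S1
    have hgenXY : Generating G (S1 \ S2) (S2 \ S1) := by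
      refine ⟨⟨hXne, hYne, ?_, h1.1.mono Set.diff_subset, h2.1.mono Set.diff_subset, hadj⟩,
        S1 ∩ S2, h1.1.mono Set.inter_subset_left, ?_, ?_, ?_⟩
      · exact disjoint_sdiff_sdiff
      · rw [Set.disjoint_union_right]; exact ⟨dAX, dAY⟩
      · rw [hUX]; exact h1
      · rw [hUY]; exact h2
    have hXY := hgen _ _ hgenXY
    have e1 : wt w S1 = wt w (S1 ∩ S2) + wt w (S1 \ S2) := by
      rw [← wt_union w dAX, hUX]
    have e2 : wt w S2 = wt w (S1 ∩ S2) + wt w (S2 \ S1) := by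
      rw [← wt_union w dAY, hUY]
    exact hne (by rw [e1, e2, hXY])
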